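/- Let p,t∈ℂ* with |p|<1, let s≥1, n≥1, μ∈Z_{s,n}, and let c=(c_1,…,c_s)∈(ℂ*)^s be generic (all denominators in the definition of E_μ nonzero, both for c and for the shifted parameters). Then for every k∈{1,…,s} and every z∈(ℂ*)^n, E_μ(c_1,…,p·c_k,…,c_s; z; p) = E_μ(c_1,…,c_s; z; p) · ( t^{2·C(μ_k,2)} · p^{μ_k} · c_k^{2μ_k} )^{s-1}, where C(a,b)=binomial(a,b). -/

import Mathlib

open scoped BigOperators Topology
open Finset MeasureTheory

noncomputable section

/-- `(u;p)_∞ = ∏_{i≥0} (1 - p^i u)`. -/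
def poch (u p : ℂ) : ℂ := ∏' i : ℕ, (1 - p ^ i * u)

/-- `(u;p,q)_∞ = ∏_{i,j≥0} (1 - p^i q^j u)`. -/
def poch2 (u p q : ℂ) : ℂ := ∏' ij : ℕ × ℕ, (1 - p ^ ij.1 * q ^ ij.2 * u)

/-- The multiplicative theta function `θ(u;p)`. -/
def theta (u p : ℂ) : ℂ := poch u p * poch (p / u) p

/-- The elliptic gamma function `Γ(u;p,q)`. -/
def ellGamma (u p q : ℂ) : ℂ := poch2 (p * q / u) p q / poch2 u p q

/-- `e(u,v;p) = u⁻¹ θ(uv;p) θ(u/v;p)`. -/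
def efun (p t u v : ℂ) : ℂ := u⁻¹ * theta (u * v) p * theta (u / v) p

/-- `θ(u;p)_{t,k}`. -/
def thetaFac (p t u : ℂ) (k : ℕ) : ℂ := ∏ j ∈ Finset.range k, theta (t ^ j * u) p

/-- `e(u,v;p)_{t,k}`. -/
def efunFac (p t u v : ℂ) (k : ℕ) : ℂ := ∏ j ∈ Finset.range k, efun p t (t ^ j * u) v

/-- The number of indices `j < i` with `k j = l`. -/
def cnt {n s : ℕ} (k : Fin n → Fin s) (i : ℕ) (l : Fin s) : ℕ :=
  (Finset.univ.filter (fun j : Fin n => (j : ℕ) < i ∧ k j = l)).card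

/-- The elliptic interpolation function `E_μ(c;z;p)` of type `BC_n`. -/
def interpE (p t : ℂ) {s n : ℕ} (c : Fin s → ℂ) (z : Fin n → ℂ) (μ : Fin s → ℕ) : ℂ :=
  ∑ k : Fin n → Fin s,
    if ∀ l, cnt k n l = μ l then
      ∏ i : Fin n, ∏ l ∈ Finset.univ.filter (fun l => l ≠ k i),
        efun p t (z i) (t ^ cnt k ((i : ℕ) + 1) l * c l) /
          efun p t (t ^ cnt k (i : ℕ) (k i) * c (k i)) (t ^ cnt k (i : ℕ) l * c l)
    else 0

/-- `Z_{s,n}`, the multi-indices `μ ∈ ℕ^s` with `|μ| = n`. -/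
abbrev Zidx (s n : ℕ) := {μ : Fin s → ℕ // ∑ i, μ i = n}

instance (s n : ℕ) : Fintype (Zidx s n) :=
  Fintype.subtype (Finset.Nat.antidiagonalTuple s n)
    (fun μ => Finset.Nat.mem_antidiagonalTuple)

/-- The `BC_n` elliptic hypergeometric kernel `Φ(z;a;p,q)`. -/
def PhiBC (p q t : ℂ) {n m : ℕ} (a : Fin m → ℂ) (z : Fin n → ℂ) : ℂ :=
  (∏ i, (∏ k, ellGamma (a k * z i) p q * ellGamma (a k * (z i)⁻¹) p q) /
      (ellGamma (z i ^ 2) p q * ellGamma ((z i)⁻¹ ^ 2) p q)) *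
  ∏ i, ∏ j ∈ Finset.univ.filter (fun j => i < j),
    (ellGamma (t * (z i * z j)) p q * ellGamma (t * (z i / z j)) p q *
        ellGamma (t * (z j / z i)) p q * ellGamma (t / (z i * z j)) p q) /
      (ellGamma (z i * z j) p q * ellGamma (z i / z j) p q *
        ellGamma (z j / z i) p q * ellGamma ((z i * z j)⁻¹) p q)

/-- `∫_{T^n} f(z) ω_n(z)` where `ω_n(z) = dz/((2πi)^n z₁⋯z_n)`. -/
def torusInt (n : ℕ) (f : (Fin n → ℂ) → ℂ) : ℂ :=
  (1 / (2 * (Real.pi : ℂ))) ^ n *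
    ∫ θ : Fin n → ℝ in Set.univ.pi fun _ : Fin n => Set.Icc (0 : ℝ) (2 * Real.pi),
      f fun i => Complex.exp (Complex.I * (θ i : ℂ))


lemma summable_log_aux (p u : ℂ) (hp : ‖p‖ < 1) :
    Summable (fun i : ℕ => Complex.log (1 - p ^ i * u)) := by
  have hs : Summable (fun i : ℕ => p ^ i * u) :=
    (summable_geometric_of_norm_lt_one (by simpa using hp)).mul_right u
  have htend : Filter.Tendsto (fun i : ℕ => ‖p ^ i * u‖) Filter.atTop (nhds 0) := by
    simpa using hs.tendsto_atTop_zero.norm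
  have hev : ∀ᶠ i in Filter.atTop, ‖p ^ i * u‖ ≤ 1/2 := by
    have := htend.eventually_le_const (by norm_num : (0:ℝ) < 1/2)
    simpa using this
  apply Summable.of_norm_bounded_eventually (g := fun i => (3/2) * ‖p ^ i * u‖)
    (hs.norm.mul_left _)
  rw [Nat.cofinite_eq_atTop]
  filter_upwards [hev] with i hi
  have he : (1 : ℂ) - p ^ i * u = 1 + (-(p ^ i * u)) := by ring
  rw [he]
  have := Complex.norm_log_one_add_half_le_self (z := -(p ^ i * u)) (by rwa [norm_neg])
  simpa [norm_neg] using this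

lemma hasProd_zero_of_eq_zero {f : ℕ → ℂ} (i0 : ℕ) (h : f i0 = 0) : HasProd f 0 := by
  unfold HasProd
  have hev : ∀ᶠ s : Finset ℕ in Filter.atTop, ∏ i ∈ s, f i = 0 := by
    filter_upwards [Filter.eventually_ge_atTop {i0}] with s hs
    exact Finset.prod_eq_zero (hs (Finset.mem_singleton_self i0)) h
  exact Filter.Tendsto.congr' (Filter.EventuallyEq.symm hev) tendsto_const_nhds

lemma multipliable_poch (p u : ℂ) (hp : ‖p‖ < 1) :
    Multipliable (fun i : ℕ => 1 - p ^ i * u) := by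
  by_cases h : ∀ i : ℕ, 1 - p ^ i * u ≠ 0
  · exact Complex.multipliable_of_summable_log (summable_log_aux p u hp)
  · push_neg at h
    obtain ⟨i0, h0⟩ := h
    exact ⟨0, hasProd_zero_of_eq_zero i0 h0⟩

lemma poch_peel (p u : ℂ) (hp : ‖p‖ < 1) :
    poch u p = (1 - u) * poch (p * u) p := by
  have hg : Multipliable (fun i : ℕ => 1 - p ^ (i + 1) * u) := by
    refine (multipliable_poch p (p * u) hp).congr fun i => by ring
  set F : ℕ → ℂ := fun n => if n = 0 then 1 else 1 - p ^ n * u with hF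
  have h1 : HasProd F (∏' i : ℕ, (1 - p ^ (i + 1) * u)) := by
    rw [← Function.Injective.hasProd_iff Nat.succ_injective (f := F)
      (by intro x hx; simp only [hF]; rw [if_pos]; rcases Nat.eq_zero_or_pos x with h | h
          · exact h
          · exact absurd ⟨x - 1, by omega⟩ hx)]
    refine hg.hasProd.congr fun i => by simp [hF, Nat.succ_ne_zero]
  have h2 : HasProd (fun n : ℕ => if n = 0 then (1 - u) else 1) (1 - u) :=
    hasProd_ite_eq 0 (1 - u)
  have hfe : (fun n : ℕ => F n * (if n = 0 then (1 - u) else 1))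
      = fun i : ℕ => 1 - p ^ i * u := by
    funext n
    cases n with
    | zero => simp [hF]
    | succ m => simp [hF]
  have h3 : HasProd (fun i : ℕ => 1 - p ^ i * u)
      ((∏' i : ℕ, (1 - p ^ (i + 1) * u)) * (1 - u)) := hfe ▸ (h1.mul h2)
  have h4 : poch (p * u) p = ∏' i : ℕ, (1 - p ^ (i + 1) * u) :=
    tprod_congr fun i => by rw [pow_succ]; ring_nf
  rw [poch, h3.tprod_eq, h4, mul_comm]


lemma theta_pshift (p u : ℂ) (hp : ‖p‖ < 1) (hp0 : p ≠ 0) (hu : u ≠ 0) :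
    theta (p * u) p = -u⁻¹ * theta u p := by
  have h1 : p / (p * u) = u⁻¹ := by field_simp
  have h2 : poch u⁻¹ p = (1 - u⁻¹) * poch (p / u) p := by
    rw [poch_peel p u⁻¹ hp, div_eq_mul_inv]
  have h3 : poch u p = (1 - u) * poch (p * u) p := poch_peel p u hp
  rw [theta, theta, h1, h2, h3]
  field_simp
  ring

lemma efun_right_pshift (p t u v : ℂ) (hp : ‖p‖ < 1) (hp0 : p ≠ 0)
    (hu : u ≠ 0) (hv : v ≠ 0) :
    efun p t u (p * v) = (p * v ^ 2)⁻¹ * efun p t u v := by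
  have hX : theta (u * (p * v)) p = -(u * v)⁻¹ * theta (u * v) p := by
    rw [show u * (p * v) = p * (u * v) by ring]
    exact theta_pshift p (u * v) hp hp0 (mul_ne_zero hu hv)
  have hw : u / (p * v) ≠ 0 := div_ne_zero hu (mul_ne_zero hp0 hv)
  have hY : theta (u / v) p = -(u / (p * v))⁻¹ * theta (u / (p * v)) p := by
    rw [show u / v = p * (u / (p * v)) by field_simp]
    exact theta_pshift p (u / (p * v)) hp hp0 hw
  rw [efun, efun, hX, hY]
  field_simp

lemma efun_left_pshift (p t u v : ℂ) (hp : ‖p‖ < 1) (hp0 : p ≠ 0)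
    (hu : u ≠ 0) (hv : v ≠ 0) :
    efun p t (p * u) v = (p * u ^ 2)⁻¹ * efun p t u v := by
  have hX : theta (p * u * v) p = -(u * v)⁻¹ * theta (u * v) p := by
    rw [show p * u * v = p * (u * v) by ring]
    exact theta_pshift p (u * v) hp hp0 (mul_ne_zero hu hv)
  have hZ : theta (p * u / v) p = -(u / v)⁻¹ * theta (u / v) p := by
    rw [show p * u / v = p * (u / v) by ring]
    exact theta_pshift p (u / v) hp hp0 (div_ne_zero hu hv)
  rw [efun, efun, hX, hZ]
  field_simp

lemma sum_card_filter_lt {α : Type*} [LinearOrder α] (S : Finset α) :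
    ∑ i ∈ S, (S.filter (fun j => j < i)).card = S.card.choose 2 := by
  classical
  induction S using Finset.induction_on_max with
  | empty => simp
  | insert a s ha ih =>
    have hns : a ∉ s := fun h => lt_irrefl a (ha a h)
    rw [Finset.sum_insert hns]
    have h1 : ((insert a s).filter (fun j => j < a)) = s := by
      ext x
      simp only [Finset.mem_filter, Finset.mem_insert]
      constructor
      · rintro ⟨hx | hx, hlt⟩
        · exact absurd hlt (by simp [hx])
        · exact hx
      · intro hx; exact ⟨Or.inr hx, ha x hx⟩
    have h2 : ∀ i ∈ s, (((insert a s).filter (fun j => j < i)).card)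
        = ((s.filter (fun j => j < i)).card) := by
      intro i hi
      rw [Finset.filter_insert, if_neg (not_lt.mpr (le_of_lt (ha i hi)))]
    rw [h1, Finset.sum_congr rfl h2, ih, Finset.card_insert_of_notMem hns,
      Nat.choose_succ_succ, Nat.choose_one_right]

lemma cnt_succ_of_ne {n s : ℕ} (f : Fin n → Fin s) (i : Fin n) (l : Fin s) (h : f i ≠ l) :
    cnt f ((i : ℕ) + 1) l = cnt f (i : ℕ) l := by
  unfold cnt
  congr 1
  ext j
  simp only [Finset.mem_filter, Finset.mem_univ, true_and]
  constructor
  · rintro ⟨hj, hjl⟩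
    refine ⟨?_, hjl⟩
    rcases Nat.lt_succ_iff_lt_or_eq.mp hj with h' | h'
    · exact h'
    · exact absurd (by rw [← Fin.val_injective h']; exact hjl) h
  · rintro ⟨hj, hjl⟩
    exact ⟨Nat.lt_succ_of_lt hj, hjl⟩

lemma cnt_eq_filter_card {n s : ℕ} (f : Fin n → Fin s) (i : Fin n) (l : Fin s) :
    cnt f (i : ℕ) l
      = ((Finset.univ.filter (fun j => f j = l)).filter (fun j => j < i)).card := by
  unfold cnt
  congr 1
  rw [Finset.filter_filter]
  ext j
  simp only [Finset.mem_filter, Finset.mem_univ, true_and, Fin.lt_def]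
  exact and_comm

lemma cnt_top {n s : ℕ} (f : Fin n → Fin s) (l : Fin s) :
    cnt f n l = (Finset.univ.filter (fun j => f j = l)).card := by
  unfold cnt
  congr 1
  ext j
  simp [j.isLt]

/-- quasi-periodicity of the elliptic interpolation function with
respect to `p`-shifts of the parameters. -/
theorem interpE_param_pshift (p t : ℂ) (hp0 : p ≠ 0) (hp : ‖p‖ < 1) (ht0 : t ≠ 0)
    (s n : ℕ) (hs : 1 ≤ s) (hn : 1 ≤ n) (μ : Zidx s n)
    (c : Fin s → ℂ) (hc : ∀ i, c i ≠ 0)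
    (hgen : ∀ α β : ℕ, α ≤ n → β ≤ n → ∀ i j : Fin s, i ≠ j →
      efun p t (t ^ α * c i) (t ^ β * c j) ≠ 0)
    (k : Fin s)
    (hgen' : ∀ α β : ℕ, α ≤ n → β ≤ n → ∀ i j : Fin s, i ≠ j →
      efun p t (t ^ α * Function.update c k (p * c k) i)
        (t ^ β * Function.update c k (p * c k) j) ≠ 0)
    (z : Fin n → ℂ) (hz : ∀ i, z i ≠ 0) :
    interpE p t (Function.update c k (p * c k)) z μ.1
    = interpE p t c z μ.1
        * (t ^ (2 * (μ.1 k).choose 2) * p ^ μ.1 k * c k ^ (2 * μ.1 k)) ^ (s - 1) := by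
  set c' := Function.update c k (p * c k) with hc'def
  have hck' : c' k = p * c k := Function.update_self k (p * c k) c
  have hcne : ∀ l : Fin s, l ≠ k → c' l = c l := fun l hl => Function.update_of_ne hl _ c
  unfold interpE
  rw [Finset.sum_mul]
  refine Finset.sum_congr rfl fun f _ => ?_
  rw [ite_mul, zero_mul]
  split_ifs with hf
  · -- the main term-by-term identity
    set S : Finset (Fin n) := Finset.univ.filter (fun i : Fin n => f i = k) with hS
    set G : Fin n → ℂ := fun i =>
      if f i = k then p * (t ^ cnt f (i : ℕ) k * c k) ^ 2 else 1 with hG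
    have hA : ∀ i : Fin n,
        (∏ l ∈ Finset.univ.filter (fun l => l ≠ f i),
          efun p t (z i) (t ^ cnt f ((i : ℕ) + 1) l * c' l) /
            efun p t (t ^ cnt f (i : ℕ) (f i) * c' (f i)) (t ^ cnt f (i : ℕ) l * c' l))
        = (∏ l ∈ Finset.univ.filter (fun l => l ≠ f i),
          efun p t (z i) (t ^ cnt f ((i : ℕ) + 1) l * c l) /
            efun p t (t ^ cnt f (i : ℕ) (f i) * c (f i)) (t ^ cnt f (i : ℕ) l * c l))
          * (G i) ^ (s - 1) := by
      intro i
      have hcard : (Finset.univ.filter (fun l : Fin s => l ≠ f i)).card = s - 1 := by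
        rw [Finset.filter_ne', Finset.card_erase_of_mem (Finset.mem_univ _),
          Finset.card_univ, Fintype.card_fin]
      by_cases h : f i = k
      · -- every factor picks up the same unit
        have hGi : G i = p * (t ^ cnt f (i : ℕ) k * c k) ^ 2 := by rw [hG]; simp [h]
        have hterm : ∀ l ∈ Finset.univ.filter (fun l : Fin s => l ≠ f i),
            efun p t (z i) (t ^ cnt f ((i : ℕ) + 1) l * c' l) /
              efun p t (t ^ cnt f (i : ℕ) (f i) * c' (f i)) (t ^ cnt f (i : ℕ) l * c' l)
            = (efun p t (z i) (t ^ cnt f ((i : ℕ) + 1) l * c l) /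
              efun p t (t ^ cnt f (i : ℕ) (f i) * c (f i)) (t ^ cnt f (i : ℕ) l * c l))
              * (p * (t ^ cnt f (i : ℕ) k * c k) ^ 2) := by
          intro l hl
          have hlfi : l ≠ f i := (Finset.mem_filter.mp hl).2
          have hlk : l ≠ k := h ▸ hlfi
          rw [hcne l hlk, h, hck']
          have harg : t ^ cnt f (i : ℕ) k * (p * c k)
              = p * (t ^ cnt f (i : ℕ) k * c k) := by ring
          rw [harg, efun_left_pshift p t _ _ hp hp0
            (mul_ne_zero (pow_ne_zero _ ht0) (hc k))
            (mul_ne_zero (pow_ne_zero _ ht0) (hc l))]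
          rw [div_eq_mul_inv, div_eq_mul_inv, mul_inv, inv_inv]
          ring
        rw [Finset.prod_congr rfl hterm, Finset.prod_mul_distrib, Finset.prod_const,
          hcard, hGi]
      · -- cancellation
        have hGi : G i = 1 := by rw [hG]; simp [h]
        have hterm : ∀ l ∈ Finset.univ.filter (fun l : Fin s => l ≠ f i),
            efun p t (z i) (t ^ cnt f ((i : ℕ) + 1) l * c' l) /
              efun p t (t ^ cnt f (i : ℕ) (f i) * c' (f i)) (t ^ cnt f (i : ℕ) l * c' l)
            = efun p t (z i) (t ^ cnt f ((i : ℕ) + 1) l * c l) /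
              efun p t (t ^ cnt f (i : ℕ) (f i) * c (f i)) (t ^ cnt f (i : ℕ) l * c l) := by
          intro l hl
          rw [hcne (f i) h]
          by_cases hlk : l = k
          · subst hlk
            rw [hck', cnt_succ_of_ne f i l h]
            have harg : t ^ cnt f (i : ℕ) l * (p * c l)
                = p * (t ^ cnt f (i : ℕ) l * c l) := by ring
            rw [harg, efun_right_pshift p t _ _ hp hp0 (hz i)
              (mul_ne_zero (pow_ne_zero _ ht0) (hc l)),
              efun_right_pshift p t _ _ hp hp0
                (mul_ne_zero (pow_ne_zero _ ht0) (hc (f i)))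
                (mul_ne_zero (pow_ne_zero _ ht0) (hc l))]
            exact mul_div_mul_left _ _ (inv_ne_zero (mul_ne_zero hp0
              (pow_ne_zero _ (mul_ne_zero (pow_ne_zero _ ht0) (hc l)))))
          · rw [hcne l hlk]
        rw [Finset.prod_congr rfl hterm, hGi, one_pow, mul_one]
    rw [Finset.prod_congr rfl (fun i _ => hA i), Finset.prod_mul_distrib,
      Finset.prod_pow]
    congr 1
    have hprod : (∏ i : Fin n, G i)
        = ∏ i ∈ S, (p * (t ^ cnt f (i : ℕ) k * c k) ^ 2) := by
      rw [hG, hS, Finset.prod_filter]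
    have hScard : S.card = μ.1 k := by
      rw [hS, ← cnt_top f k, hf k]
    have hsum : (∑ i ∈ S, cnt f (i : ℕ) k) = (μ.1 k).choose 2 := by
      have : ∀ i ∈ S, cnt f (i : ℕ) k = (S.filter (fun j => j < i)).card := by
        intro i _
        rw [cnt_eq_filter_card f i k, hS]
      rw [Finset.sum_congr rfl this, sum_card_filter_lt, hScard]
    rw [hprod, Finset.prod_mul_distrib, Finset.prod_const, Finset.prod_pow,
      Finset.prod_mul_distrib, Finset.prod_pow_eq_pow_sum, Finset.prod_const,
      hScard, hsum]
    ring
  · rfl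


end
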